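/- arXiv:1304.6883 — 2 statements merged into one kernel-verified Lean document; each statement's English description precedes it below -/
import Mathlib

section
/- For any semi-thin association schemoid (C,S,T), the category R̃(C,S,T) — with object set S₀, Hom(α,β) = _αS_β, composition τ∘σ equal to the unique μ ∈ _αS_γ with p^μ_{τσ} = 1, and identity of α given by α itself — is a well-defined category and moreover a groupoid, in which the inverse of σ ∈ _αS_β is σ* = T(σ) ∈ _βS_α. -/
open CategoryTheory

universe v u

/-- The set of all morphisms of a category, bundled with their endpoints. -/
def Mor (C : Type u) [Category.{v} C] : Type max u v := Σ (x y : C), x ⟶ y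

namespace Mor
variable {C : Type u} [Category.{v} C]
/-- The source of a morphism. -/
def src (m : Mor C) : C := m.1
/-- The target of a morphism. -/
def tgt (m : Mor C) : C := m.2.1
end Mor

/-- The identity of `x` as an element of `Mor C`. -/
def idMor {C : Type u} [Category.{v} C] (x : C) : Mor C := ⟨x, x, 𝟙 x⟩

/-- Bundle a morphism into `Mor C`. -/
def mk3 {C : Type u} [Category.{v} C] {x y : C} (f : x ⟶ y) : Mor C := ⟨x, y, f⟩

/-- `IsComp a b m` holds iff `a` and `b` are composable (the target of `b` is the
source of `a`) and the composite `a ∘ b` equals `m`. -/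
def IsComp {C : Type u} [Category.{v} C] (a b m : Mor C) : Prop :=
  ∃ (x y z : C) (f : x ⟶ y) (g : y ⟶ z), b = mk3 f ∧ a = mk3 g ∧ m = mk3 (f ≫ g)

/-- The fiber over `m` of the concatenation map `π_{στ} : σ ×_{ob C} τ → mor C`,
where `σ` is the class of the second (outer) factor and `τ` that of the first
(inner) factor. -/
def compFiber {C : Type u} [Category.{v} C] (σ τ : Set (Mor C)) (m : Mor C) :
    Set (Mor C × Mor C) :=
  {p | p.1 ∈ σ ∧ p.2 ∈ τ ∧ IsComp p.1 p.2 m}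

/-- A quasi-schemoid: a small category together with a partition of its set of
morphisms satisfying the concatenation axiom. -/
structure QuasiSchemoid (C : Type u) [Category.{v} C] where
  part : Set (Set (Mor C))
  isPartition : Setoid.IsPartition part
  concat : ∀ σ ∈ part, ∀ τ ∈ part, ∀ μ ∈ part, ∀ f ∈ μ, ∀ g ∈ μ,
    Nonempty ((compFiber σ τ f : Set (Mor C × Mor C)) ≃ (compFiber σ τ g : Set (Mor C × Mor C)))

/-- `p^μ_{τσ} = n` : every `m ∈ μ` has exactly `n` factorizations with outer factor
in `τ` and inner factor in `σ`. -/
def structEq {C : Type u} [Category.{v} C] (τ σ μ : Set (Mor C)) (n : ℕ) : Prop :=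
  ∀ m ∈ μ, Nat.card (compFiber τ σ m) = n

/-- The set `J₀` of identities. -/
def J0 (C : Type u) [Category.{v} C] : Set (Mor C) := {m | ∃ x : C, m = idMor x}

/-- A quasi-schemoid is unital if every class meeting `J₀` is contained in `J₀`. -/
def QuasiSchemoid.IsUnital {C : Type u} [Category.{v} C] (Q : QuasiSchemoid C) : Prop :=
  ∀ σ ∈ Q.part, (σ ∩ J0 C).Nonempty → σ ⊆ J0 C

/-- A contravariant endofunctor. -/
structure ContraFunctor (C : Type u) [Category.{v} C] where
  obj : C → C
  map : ∀ {x y : C}, (x ⟶ y) → (obj y ⟶ obj x)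
  map_id : ∀ x : C, map (𝟙 x) = 𝟙 (obj x)
  map_comp : ∀ {x y z : C} (f : x ⟶ y) (g : y ⟶ z), map (f ≫ g) = map g ≫ map f

/-- The action of a contravariant functor on bundled morphisms. -/
def ContraFunctor.onMor {C : Type u} [Category.{v} C] (T : ContraFunctor C) (m : Mor C) :
    Mor C :=
  ⟨T.obj m.2.1, T.obj m.1, T.map m.2.2⟩

/-- The set `J` of endomorphisms. -/
def JEndo (C : Type u) [Category.{v} C] : Set (Mor C) := {m | m.src = m.tgt}

/-- An association schemoid. -/
structure AssnSchemoid (C : Type u) [Category.{v} C] extends QuasiSchemoid C where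
  T : ContraFunctor C
  T_invol : ∀ m : Mor C, T.onMor (T.onMor m) = m
  T_part : ∀ σ ∈ part, T.onMor '' σ ∈ part
  endo : ∀ σ ∈ part, (σ ∩ JEndo C).Nonempty → σ ⊆ JEndo C

universe v₂ u₂

/-- The action of a functor on bundled morphisms. -/
def morMap {C : Type u} {D : Type u₂} [Category.{v} C] [Category.{v₂} D] (F : C ⥤ D)
    (m : Mor C) : Mor D :=
  ⟨F.obj m.1, F.obj m.2.1, F.map m.2.2⟩

/-- A functor is a morphism of quasi-schemoids if each class of the source partition is
mapped into some class of the target partition. -/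
def IsQSMor {C : Type u} {D : Type u₂} [Category.{v} C] [Category.{v₂} D]
    (SC : Set (Set (Mor C))) (SD : Set (Set (Mor D))) (F : C ⥤ D) : Prop :=
  ∀ σ ∈ SC, ∃ τ ∈ SD, morMap F '' σ ⊆ τ

/-- A morphism of association schemoids: a morphism of quasi-schemoids commuting with the
contravariant involutions. -/
def IsASMor {C : Type u} {D : Type u₂} [Category.{v} C] [Category.{v₂} D]
    (SC : Set (Set (Mor C))) (SD : Set (Set (Mor D)))
    (TC : ContraFunctor C) (TD : ContraFunctor D) (F : C ⥤ D) : Prop :=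
  IsQSMor SC SD F ∧ ∀ m : Mor C, morMap F (TC.onMor m) = TD.onMor (morMap F m)

/-- `S₀` : the classes containing some identity. -/
def S0 {C : Type u} [Category.{v} C] (S : Set (Set (Mor C))) : Set (Set (Mor C)) :=
  {α | α ∈ S ∧ ∃ x : C, idMor x ∈ α}

/-- `_αS_β = {σ ∈ S | p^σ_{σα} = p^σ_{βσ} = 1}`. -/
def hom2 {C : Type u} [Category.{v} C] (S : Set (Set (Mor C))) (α β : Set (Mor C)) :
    Set (Set (Mor C)) :=
  {σ | σ ∈ S ∧ structEq σ α σ 1 ∧ structEq β σ σ 1}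

/-- The partition class containing a given morphism. -/
def classOf {C : Type u} [Category.{v} C] (S : Set (Set (Mor C))) (m : Mor C) :
    Set (Mor C) :=
  {m' | ∃ σ ∈ S, m ∈ σ ∧ m' ∈ σ}
/-- The inverse of a bundled morphism in a groupoid. -/
def morInv {C : Type u} [Groupoid.{v} C] (m : Mor C) : Mor C :=
  ⟨m.2.1, m.1, Groupoid.inv m.2.2⟩

/-- A semi-thin association schemoid. -/
def IsSemiThin {C : Type u} [Groupoid.{v} C] (A : AssnSchemoid C) : Prop :=
  A.toQuasiSchemoid.IsUnital ∧
  (∀ σ ∈ A.part, ∀ x : C, ({f | f ∈ σ ∧ Mor.src f = x} : Set (Mor C)).Subsingleton) ∧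
  (∀ m : Mor C, A.T.onMor m = morInv m)

/-- A thin association schemoid with base point set `V`. -/
def IsThin {C : Type u} [Groupoid.{v} C] (A : AssnSchemoid C) (V : Set C) : Prop :=
  IsSemiThin A ∧
  (∀ x y : C, Subsingleton (x ⟶ y)) ∧
  (∀ x : C, ∃! v : C, v ∈ V ∧ Nonempty (x ⟶ v)) ∧
  Set.BijOn (fun v => classOf A.part (idMor v)) V (S0 A.part)

/-- `pOne A τ σ μ` : the structure constant `p^μ_{τσ}` equals `1`. -/
def pOne {C : Type u} [Category.{v} C] (τ σ μ : Set (Mor C)) : Prop := structEq τ σ μ 1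


section RtildeAux

open CategoryTheory

variable {C : Type u}

lemma card_one_of_unique {X : Type*} {s : Set X} {a : X} (ha : a ∈ s)
    (h : ∀ b ∈ s, b = a) : Nat.card s = 1 := by
  rw [Nat.card_eq_one_iff_unique]
  exact ⟨⟨fun p q => Subtype.ext ((h p p.2).trans (h q q.2).symm)⟩, ⟨a, ha⟩⟩

lemma mem_of_card_one {X : Type*} {s : Set X} (h : Nat.card s = 1) : ∃ a, a ∈ s := by
  rw [Nat.card_eq_one_iff_unique] at h
  obtain ⟨⟨a, ha⟩⟩ := h.2
  exact ⟨a, ha⟩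

section Cat
variable [Category.{v} C]

lemma part_nonempty (Q : QuasiSchemoid C) {σ : Set (Mor C)} (hσ : σ ∈ Q.part) :
    σ.Nonempty :=
  Set.nonempty_iff_ne_empty.mpr (fun h => Q.isPartition.1 (h ▸ hσ))

lemma part_eq (Q : QuasiSchemoid C) {σ τ : Set (Mor C)} {m : Mor C}
    (hσ : σ ∈ Q.part) (hτ : τ ∈ Q.part) (hmσ : m ∈ σ) (hmτ : m ∈ τ) : σ = τ := by
  obtain ⟨b, _, hb⟩ := Q.isPartition.2 m
  exact (hb σ ⟨hσ, hmσ⟩).trans (hb τ ⟨hτ, hmτ⟩).symm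

lemma S0_subset_J0 {Q : QuasiSchemoid C} (hu : Q.IsUnital) {α : Set (Mor C)}
    (hα : α ∈ S0 Q.part) : α ⊆ J0 C := by
  obtain ⟨hαS, x, hx⟩ := hα
  exact hu α hαS ⟨idMor x, hx, ⟨x, rfl⟩⟩

lemma mor_mk_inj {x y : C} {f g : x ⟶ y} (h : (mk3 f : Mor C) = mk3 g) : f = g := by
  injection h with h1 h2
  injection h2 with h3 h4

lemma isComp_mk3 {x y z : C} (f : x ⟶ y) (g : y ⟶ z) :
    IsComp (mk3 g) (mk3 f) (mk3 (f ≫ g)) := ⟨x, y, z, f, g, rfl, rfl, rfl⟩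

lemma IsComp.src_eq {a b m : Mor C} (h : IsComp a b m) : m.src = b.src := by
  obtain ⟨x, y, z, f, g, rfl, rfl, rfl⟩ := h; rfl

lemma IsComp.tgt_eq {a b m : Mor C} (h : IsComp a b m) : m.tgt = a.tgt := by
  obtain ⟨x, y, z, f, g, rfl, rfl, rfl⟩ := h; rfl

lemma IsComp.id_left {a b m : Mor C} {u : C} (h : IsComp a b m) (hb : b = idMor u) :
    a = m := by
  obtain ⟨x, y, z, f, g, rfl, rfl, rfl⟩ := h
  obtain rfl : u = x := (congrArg Mor.src hb).symm
  obtain rfl : u = y := (congrArg Mor.tgt hb).symm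
  obtain rfl : f = 𝟙 u := mor_mk_inj hb
  simp [mk3]; rfl

lemma IsComp.id_right {a b m : Mor C} {u : C} (h : IsComp a b m) (ha : a = idMor u) :
    b = m := by
  obtain ⟨x, y, z, f, g, rfl, rfl, rfl⟩ := h
  obtain rfl : u = y := (congrArg Mor.src ha).symm
  obtain rfl : u = z := (congrArg Mor.tgt ha).symm
  obtain rfl : g = 𝟙 u := mor_mk_inj ha
  simp [mk3]; rfl

lemma isComp_id_src (m : Mor C) : IsComp m (idMor m.src) m := by
  obtain ⟨x, z, φ⟩ := m
  exact ⟨x, x, z, 𝟙 x, φ, rfl, rfl, by simp [mk3, idMor, Mor.src, Mor.tgt]; rfl⟩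

lemma isComp_id_tgt (m : Mor C) : IsComp (idMor m.tgt) m m := by
  obtain ⟨x, z, φ⟩ := m
  exact ⟨x, z, z, φ, 𝟙 z, rfl, rfl, by simp [mk3, idMor, Mor.src, Mor.tgt]; rfl⟩

lemma card_id_inner {α μ : Set (Mor C)} (hα0 : α ⊆ J0 C) {m : Mor C} (hm : m ∈ μ)
    (hsrc : idMor m.src ∈ α) : Nat.card (compFiber μ α m) = 1 := by
  apply card_one_of_unique (a := (m, idMor m.src))
  · exact ⟨hm, hsrc, isComp_id_src m⟩
  · rintro ⟨a, b⟩ ⟨ha, hb, hc⟩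
    obtain ⟨u, rfl⟩ := hα0 hb
    have h1 : a = m := hc.id_left rfl
    have h2 : (idMor u : Mor C) = idMor m.src := (congrArg idMor hc.src_eq).symm
    rw [h1, h2]

lemma card_id_outer {β μ : Set (Mor C)} (hβ0 : β ⊆ J0 C) {m : Mor C} (hm : m ∈ μ)
    (htgt : idMor m.tgt ∈ β) : Nat.card (compFiber β μ m) = 1 := by
  apply card_one_of_unique (a := (idMor m.tgt, m))
  · exact ⟨htgt, hm, isComp_id_tgt m⟩
  · rintro ⟨a, b⟩ ⟨ha, hb, hc⟩
    obtain ⟨u, rfl⟩ := hβ0 ha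
    have h1 : b = m := hc.id_right rfl
    have h2 : (idMor u : Mor C) = idMor m.tgt := (congrArg idMor hc.tgt_eq).symm
    rw [h1, h2]

lemma exists_decomp {σ τ : Set (Mor C)} {m : Mor C}
    (h : Nat.card (compFiber τ σ m) = 1) :
    ∃ (x y z : C) (φ : x ⟶ y) (ψ : y ⟶ z), mk3 φ ∈ σ ∧ mk3 ψ ∈ τ ∧ m = mk3 (φ ≫ ψ) := by
  obtain ⟨⟨a, b⟩, ha, hb, hc⟩ := mem_of_card_one h
  obtain ⟨x, y, z, φ, ψ, rfl, rfl, rfl⟩ := hc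
  exact ⟨x, y, z, φ, ψ, hb, ha, rfl⟩

lemma hom2_ends {S : Set (Set (Mor C))} {α β σ : Set (Mor C)} (hα0 : α ⊆ J0 C)
    (hβ0 : β ⊆ J0 C) (hσ : σ ∈ hom2 S α β) {m : Mor C} (hm : m ∈ σ) :
    idMor m.src ∈ α ∧ idMor m.tgt ∈ β := by
  obtain ⟨hσS, h1, h2⟩ := hσ
  constructor
  · obtain ⟨⟨a, b⟩, ha, hb, hc⟩ := mem_of_card_one (h1 m hm)
    obtain ⟨u, rfl⟩ := hα0 hb
    have : m.src = u := hc.src_eq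
    rw [this]; exact hb
  · obtain ⟨⟨a, b⟩, ha, hb, hc⟩ := mem_of_card_one (h2 m hm)
    obtain ⟨u, rfl⟩ := hβ0 ha
    have : m.tgt = u := hc.tgt_eq
    rw [this]; exact ha

lemma card_fiber_eq (Q : QuasiSchemoid C) {σ τ μ : Set (Mor C)} (hσ : σ ∈ Q.part)
    (hτ : τ ∈ Q.part) (hμ : μ ∈ Q.part) {m m' : Mor C} (hm : m ∈ μ) (hm' : m' ∈ μ) :
    Nat.card (compFiber σ τ m) = Nat.card (compFiber σ τ m') :=
  Nat.card_congr (Q.concat σ hσ τ hτ μ hμ m hm m' hm').some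

end Cat

section Grpd
variable [Groupoid.{v} C]

lemma IsComp.right_unique {a a' b m : Mor C} (h : IsComp a b m) (h' : IsComp a' b m) :
    a = a' := by
  obtain ⟨x, y, z, f, g, rfl, rfl, rfl⟩ := h
  obtain ⟨x', y', z', f', g', hb, rfl, hm⟩ := h'
  obtain rfl : x = x' := congrArg Mor.src hb
  obtain rfl : y = y' := congrArg Mor.tgt hb
  obtain rfl : f = f' := mor_mk_inj hb
  obtain rfl : z = z' := congrArg Mor.tgt hm
  have hgg : f ≫ g = f ≫ g' := mor_mk_inj hm
  have hg : g = g' := by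
    have h2 := congrArg (fun t => Groupoid.inv f ≫ t) hgg
    simpa using h2
  rw [hg]

lemma src_unique {A : AssnSchemoid C} (hst : IsSemiThin A) {σ : Set (Mor C)}
    (hσ : σ ∈ A.part) {f g : Mor C} (hf : f ∈ σ) (hg : g ∈ σ) (h : f.src = g.src) :
    f = g :=
  hst.2.1 σ hσ g.src ⟨hf, h⟩ ⟨hg, rfl⟩

lemma isComp_inv_right (m : Mor C) : IsComp (morInv m) m (idMor m.src) := by
  obtain ⟨x, z, φ⟩ := m
  exact ⟨x, z, x, φ, Groupoid.inv φ, rfl, rfl, by simp [mk3, idMor, morInv, Mor.src, Mor.tgt]; rfl⟩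

lemma isComp_inv_left (m : Mor C) : IsComp m (morInv m) (idMor m.tgt) := by
  obtain ⟨x, z, φ⟩ := m
  exact ⟨z, x, z, Groupoid.inv φ, φ, rfl, rfl, by simp [mk3, idMor, morInv, Mor.src, Mor.tgt]; rfl⟩

lemma transport {A : AssnSchemoid C} (hst : IsSemiThin A) {ρ δ : Set (Mor C)}
    (hρ : ρ ∈ A.part) (hδ : δ ∈ A.part) {m : Mor C} (hm : m ∈ ρ)
    (hsrc : idMor m.src ∈ δ) {y : C} (hy : idMor y ∈ δ) :
    ∃ m' ∈ ρ, m'.src = y := by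
  have hρ' : A.T.onMor '' ρ ∈ A.part := A.T_part ρ hρ
  have h1 : (A.T.onMor m, m) ∈ compFiber (A.T.onMor '' ρ) ρ (idMor m.src) := by
    refine ⟨⟨m, hm, rfl⟩, hm, ?_⟩
    rw [hst.2.2]
    exact isComp_inv_right m
  obtain ⟨e⟩ := A.concat _ hρ' ρ hρ δ hδ (idMor m.src) hsrc (idMor y) hy
  obtain ⟨ha, hb, hc⟩ := (e ⟨_, h1⟩).2
  exact ⟨(e ⟨_, h1⟩).1.2, hb, hc.src_eq.symm⟩

lemma card_comp_fiber {A : AssnSchemoid C} (hst : IsSemiThin A) {σ τ : Set (Mor C)}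
    (hσ : σ ∈ A.part) (hτ : τ ∈ A.part) {x y z : C} {φ : x ⟶ y} {ψ : y ⟶ z}
    (hφ : mk3 φ ∈ σ) (hψ : mk3 ψ ∈ τ) :
    Nat.card (compFiber τ σ (mk3 (φ ≫ ψ))) = 1 := by
  apply card_one_of_unique (a := (mk3 ψ, mk3 φ))
  · exact ⟨hψ, hφ, isComp_mk3 φ ψ⟩
  · rintro ⟨a, b⟩ ⟨ha, hb, hc⟩
    have hbsrc : b.src = (mk3 φ).src := by rw [← hc.src_eq]; rfl
    have hb' : b = mk3 φ := src_unique hst hσ hb hφ hbsrc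
    subst hb'
    have : a = mk3 ψ := hc.right_unique (isComp_mk3 φ ψ)
    rw [this]

lemma key {A : AssnSchemoid C} (hst : IsSemiThin A) {α β γ σ τ μ : Set (Mor C)}
    (hα : α ∈ S0 A.part) (hβ : β ∈ S0 A.part) (hγ : γ ∈ S0 A.part)
    (hσ : σ ∈ hom2 A.part α β) (hτ : τ ∈ hom2 A.part β γ) (hμ : μ ∈ A.part)
    {x y z : C} {φ : x ⟶ y} {ψ : y ⟶ z} (hφ : mk3 φ ∈ σ) (hψ : mk3 ψ ∈ τ)
    (hcomp : mk3 (φ ≫ ψ) ∈ μ) :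
    pOne τ σ μ ∧ μ ∈ hom2 A.part α γ ∧
      (∀ {x' y' z' : C} (φ' : x' ⟶ y') (ψ' : y' ⟶ z'), mk3 φ' ∈ σ → mk3 ψ' ∈ τ →
        mk3 (φ' ≫ ψ') ∈ μ) := by
  have hα0 : α ⊆ J0 C := S0_subset_J0 hst.1 hα
  have hβ0 : β ⊆ J0 C := S0_subset_J0 hst.1 hβ
  have hγ0 : γ ⊆ J0 C := S0_subset_J0 hst.1 hγ
  have hσS := hσ.1
  have hτS := hτ.1
  have hp : pOne τ σ μ := by
    intro m hm
    have h := card_fiber_eq A.toQuasiSchemoid hτS hσS hμ hm hcomp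
    rw [h, card_comp_fiber hst hσS hτS hφ hψ]
  refine ⟨hp, ⟨hμ, ?_, ?_⟩, ?_⟩
  · intro m hm
    obtain ⟨x1, y1, z1, φ1, ψ1, hφ1, hψ1, rfl⟩ := exists_decomp (hp m hm)
    exact card_id_inner hα0 hm (hom2_ends hα0 hβ0 hσ hφ1).1
  · intro m hm
    obtain ⟨x1, y1, z1, φ1, ψ1, hφ1, hψ1, rfl⟩ := exists_decomp (hp m hm)
    exact card_id_outer hγ0 hm (hom2_ends hβ0 hγ0 hτ hψ1).2
  · intro x' y' z' φ' ψ' hφ' hψ'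
    have hsrc : idMor (mk3 (φ ≫ ψ)).src ∈ α := (hom2_ends hα0 hβ0 hσ hφ).1
    have hx' : idMor x' ∈ α := (hom2_ends hα0 hβ0 hσ hφ').1
    obtain ⟨m', hm', hm'src⟩ := transport hst hμ hα.1 hcomp hsrc hx'
    obtain ⟨x2, y2, z2, φ2, ψ2, hφ2, hψ2, rfl⟩ := exists_decomp (hp m' hm')
    have hbe : mk3 φ2 = mk3 φ' := src_unique hst hσS hφ2 hφ' hm'src
    obtain rfl : x2 = x' := congrArg Mor.src hbe
    obtain rfl : y2 = y' := congrArg Mor.tgt hbe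
    obtain rfl : φ2 = φ' := mor_mk_inj hbe
    have hte : mk3 ψ2 = mk3 ψ' := src_unique hst hτS hψ2 hψ' rfl
    obtain rfl : z2 = z' := congrArg Mor.tgt hte
    obtain rfl : ψ2 = ψ' := mor_mk_inj hte
    exact hm'

lemma mem_of_pOne {A : AssnSchemoid C} (hst : IsSemiThin A) {α β γ σ τ μ : Set (Mor C)}
    (hα : α ∈ S0 A.part) (hβ : β ∈ S0 A.part) (hγ : γ ∈ S0 A.part)
    (hσ : σ ∈ hom2 A.part α β) (hτ : τ ∈ hom2 A.part β γ) (hμ : μ ∈ A.part)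
    (hp : pOne τ σ μ) {x y z : C} {φ : x ⟶ y} {ψ : y ⟶ z}
    (hφ : mk3 φ ∈ σ) (hψ : mk3 ψ ∈ τ) : mk3 (φ ≫ ψ) ∈ μ := by
  obtain ⟨m, hm⟩ := part_nonempty A.toQuasiSchemoid hμ
  obtain ⟨x1, y1, z1, φ1, ψ1, hφ1, hψ1, rfl⟩ := exists_decomp (hp m hm)
  exact (key hst hα hβ hγ hσ hτ hμ hφ1 hψ1 hm).2.2 φ ψ hφ hψ

lemma exists_pair {A : AssnSchemoid C} (hst : IsSemiThin A) {α β γ σ τ : Set (Mor C)}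
    (hα : α ∈ S0 A.part) (hβ : β ∈ S0 A.part) (hγ : γ ∈ S0 A.part)
    (hσ : σ ∈ hom2 A.part α β) (hτ : τ ∈ hom2 A.part β γ) :
    ∃ (x y z : C) (φ : x ⟶ y) (ψ : y ⟶ z), mk3 φ ∈ σ ∧ mk3 ψ ∈ τ := by
  have hα0 := S0_subset_J0 hst.1 hα
  have hβ0 := S0_subset_J0 hst.1 hβ
  have hγ0 := S0_subset_J0 hst.1 hγ
  obtain ⟨f, hf⟩ := part_nonempty A.toQuasiSchemoid hσ.1
  obtain ⟨g0, hg0⟩ := part_nonempty A.toQuasiSchemoid hτ.1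
  have h1 : idMor f.tgt ∈ β := (hom2_ends hα0 hβ0 hσ hf).2
  have h2 : idMor g0.src ∈ β := (hom2_ends hβ0 hγ0 hτ hg0).1
  obtain ⟨g, hg, hgsrc⟩ := transport hst hτ.1 hβ.1 hg0 h2 h1
  obtain ⟨x, yf, φ⟩ := f
  obtain ⟨yg, z, ψ⟩ := g
  simp only [Mor.src, Mor.tgt] at hgsrc
  subst hgsrc
  exact ⟨x, yg, z, φ, ψ, hf, hg⟩

lemma comp_exists_unique {A : AssnSchemoid C} (hst : IsSemiThin A) {α β γ σ τ : Set (Mor C)}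
    (hα : α ∈ S0 A.part) (hβ : β ∈ S0 A.part) (hγ : γ ∈ S0 A.part)
    (hσ : σ ∈ hom2 A.part α β) (hτ : τ ∈ hom2 A.part β γ) :
    ∃! μ : Set (Mor C), μ ∈ hom2 A.part α γ ∧ pOne τ σ μ := by
  obtain ⟨x, y, z, φ, ψ, hφ, hψ⟩ := exists_pair hst hα hβ hγ hσ hτ
  obtain ⟨μ, ⟨hμ, hcomp⟩, -⟩ := A.isPartition.2 (mk3 (φ ≫ ψ))
  have K := key hst hα hβ hγ hσ hτ hμ hφ hψ hcomp
  refine ⟨μ, ⟨K.2.1, K.1⟩, ?_⟩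
  rintro μ' ⟨hμ', hp'⟩
  obtain ⟨m, hm⟩ := part_nonempty A.toQuasiSchemoid hμ'.1
  obtain ⟨x1, y1, z1, φ1, ψ1, hφ1, hψ1, rfl⟩ := exists_decomp (hp' _ hm)
  exact part_eq A.toQuasiSchemoid hμ'.1 hμ hm (K.2.2 φ1 ψ1 hφ1 hψ1)

lemma id_hom2 {A : AssnSchemoid C} (hst : IsSemiThin A) {α : Set (Mor C)}
    (hα : α ∈ S0 A.part) : α ∈ hom2 A.part α α := by
  have hα0 := S0_subset_J0 hst.1 hα
  refine ⟨hα.1, ?_, ?_⟩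
  · intro m hm
    obtain ⟨u, rfl⟩ := hα0 hm
    exact card_id_inner hα0 hm hm
  · intro m hm
    obtain ⟨u, rfl⟩ := hα0 hm
    exact card_id_outer hα0 hm hm

lemma star_hom2 {A : AssnSchemoid C} (hst : IsSemiThin A) {α β σ : Set (Mor C)}
    (hα : α ∈ S0 A.part) (hβ : β ∈ S0 A.part) (hσ : σ ∈ hom2 A.part α β) :
    A.T.onMor '' σ ∈ hom2 A.part β α := by
  have hα0 := S0_subset_J0 hst.1 hα
  have hβ0 := S0_subset_J0 hst.1 hβ
  refine ⟨A.T_part σ hσ.1, ?_, ?_⟩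
  · rintro m ⟨f, hf, rfl⟩
    rw [hst.2.2 f]
    exact card_id_inner hβ0 ⟨f, hf, hst.2.2 f⟩ (hom2_ends hα0 hβ0 hσ hf).2
  · rintro m ⟨f, hf, rfl⟩
    rw [hst.2.2 f]
    exact card_id_outer hα0 ⟨f, hf, hst.2.2 f⟩ (hom2_ends hα0 hβ0 hσ hf).1

lemma pOne_star_left {A : AssnSchemoid C} (hst : IsSemiThin A) {α β σ : Set (Mor C)}
    (hα : α ∈ S0 A.part) (hβ : β ∈ S0 A.part) (hσ : σ ∈ hom2 A.part α β) :
    pOne (A.T.onMor '' σ) σ α := by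
  have hα0 := S0_subset_J0 hst.1 hα
  have hβ0 := S0_subset_J0 hst.1 hβ
  intro m hm
  obtain ⟨u, rfl⟩ := hα0 hm
  obtain ⟨f0, hf0⟩ := part_nonempty A.toQuasiSchemoid hσ.1
  obtain ⟨f, hf, hfs⟩ := transport hst hσ.1 hα.1 hf0 (hom2_ends hα0 hβ0 hσ hf0).1 hm
  have hIC : IsComp (morInv f) f (idMor u) := hfs ▸ isComp_inv_right f
  apply card_one_of_unique (a := (morInv f, f))
  · exact ⟨⟨f, hf, hst.2.2 f⟩, hf, hIC⟩
  · rintro ⟨a, b⟩ ⟨ha, hb, hc⟩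
    have hbs : b.src = f.src := by rw [hfs]; exact hc.src_eq.symm
    obtain rfl : b = f := src_unique hst hσ.1 hb hf hbs
    have ha' := hc.right_unique hIC
    exact Prod.ext ha' rfl

lemma pOne_star_right {A : AssnSchemoid C} (hst : IsSemiThin A) {α β σ : Set (Mor C)}
    (hα : α ∈ S0 A.part) (hβ : β ∈ S0 A.part) (hσ : σ ∈ hom2 A.part α β) :
    pOne σ (A.T.onMor '' σ) β := by
  have hα0 := S0_subset_J0 hst.1 hα
  have hβ0 := S0_subset_J0 hst.1 hβ
  have hσ' : A.T.onMor '' σ ∈ hom2 A.part β α := star_hom2 hst hα hβ hσ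
  intro m hm
  obtain ⟨u, rfl⟩ := hβ0 hm
  obtain ⟨f0, hf0⟩ := part_nonempty A.toQuasiSchemoid hσ'.1
  obtain ⟨m', hm', hm's⟩ := transport hst hσ'.1 hβ.1 hf0 (hom2_ends hβ0 hα0 hσ' hf0).1 hm
  obtain ⟨g, hg, hTg⟩ := hm'
  rw [hst.2.2 g] at hTg
  subst hTg
  have hIC : IsComp g (morInv g) (idMor u) := by
    have h0 := isComp_inv_left g
    rwa [show Mor.tgt g = u from hm's] at h0
  apply card_one_of_unique (a := (g, morInv g))
  · exact ⟨hg, ⟨g, hg, hst.2.2 g⟩, hIC⟩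
  · rintro ⟨a, b⟩ ⟨ha, hb, hc⟩
    have hbs : b.src = (morInv g).src := by
      rw [show (morInv g).src = u from hm's]
      exact hc.src_eq.symm
    obtain rfl : b = morInv g := src_unique hst hσ'.1 hb ⟨g, hg, hst.2.2 g⟩ hbs
    have ha' := hc.right_unique hIC
    exact Prod.ext ha' rfl

end Grpd

end RtildeAux

/-- Propositions 4.6 and 4.7 of Kuribayashi–Matsuo: for a semi-thin association schemoid
`(C,S,T)`, the data `R̃(C,S,T)` — objects `S₀`, hom-sets `Hom(α,β) = _αS_β`, the composite
`τ∘σ` being the unique `μ` with `p^μ_{τσ} = 1` and the identity of `α` being `α` itself —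
form a well-defined category, which is moreover a groupoid with `σ⁻¹ = σ* = T(σ)`. -/
theorem Rtilde_is_groupoid
    {C : Type u} [Groupoid.{v} C] (A : AssnSchemoid C) (hst : IsSemiThin A) :
    -- the identity `α` is an endomorphism of `α` in `R̃`
    (∀ α ∈ S0 A.part, α ∈ hom2 A.part α α) ∧
    -- composites exist and are unique
    (∀ α ∈ S0 A.part, ∀ β ∈ S0 A.part, ∀ γ ∈ S0 A.part,
      ∀ σ ∈ hom2 A.part α β, ∀ τ ∈ hom2 A.part β γ,
        ∃! μ : Set (Mor C), μ ∈ hom2 A.part α γ ∧ pOne τ σ μ) ∧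
    -- unit laws : `σ ∘ α = σ` and `β ∘ σ = σ`
    (∀ α ∈ S0 A.part, ∀ β ∈ S0 A.part, ∀ σ ∈ hom2 A.part α β,
      pOne σ α σ ∧ pOne β σ σ) ∧
    -- associativity
    (∀ α ∈ S0 A.part, ∀ β ∈ S0 A.part, ∀ γ ∈ S0 A.part, ∀ δ ∈ S0 A.part,
      ∀ σ ∈ hom2 A.part α β, ∀ τ ∈ hom2 A.part β γ, ∀ υ ∈ hom2 A.part γ δ,
      ∀ μ₁ ∈ hom2 A.part α γ, ∀ μ₂ ∈ hom2 A.part β δ,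
        pOne τ σ μ₁ → pOne υ τ μ₂ →
        ∀ ν : Set (Mor C),
          (ν ∈ hom2 A.part α δ ∧ pOne υ μ₁ ν) ↔ (ν ∈ hom2 A.part α δ ∧ pOne μ₂ σ ν)) ∧
    -- inverses : `σ* ∘ σ = α` and `σ ∘ σ* = β`
    (∀ α ∈ S0 A.part, ∀ β ∈ S0 A.part, ∀ σ ∈ hom2 A.part α β,
      A.T.onMor '' σ ∈ hom2 A.part β α ∧
      pOne (A.T.onMor '' σ) σ α ∧ pOne σ (A.T.onMor '' σ) β) := by
  refine ⟨fun α hα => id_hom2 hst hα,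
    fun α hα β hβ γ hγ σ hσ τ hτ => comp_exists_unique hst hα hβ hγ hσ hτ,
    fun α hα β hβ σ hσ => ⟨hσ.2.1, hσ.2.2⟩, ?_,
    fun α hα β hβ σ hσ =>
      ⟨star_hom2 hst hα hβ hσ, pOne_star_left hst hα hβ hσ, pOne_star_right hst hα hβ hσ⟩⟩
  intro α hα β hβ γ hγ δ hδ σ hσ τ hτ υ hυ μ₁ hμ₁ μ₂ hμ₂ h1 h2 ν
  have hα0 := S0_subset_J0 hst.1 hα
  have hβ0 := S0_subset_J0 hst.1 hβ
  have hγ0 := S0_subset_J0 hst.1 hγ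
  have hδ0 := S0_subset_J0 hst.1 hδ
  obtain ⟨x, y, z, φ, ψ, hφ, hψ⟩ := exists_pair hst hα hβ hγ hσ hτ
  obtain ⟨u0, hu0⟩ := part_nonempty A.toQuasiSchemoid hυ.1
  have hz : idMor z ∈ γ := (hom2_ends hβ0 hγ0 hτ hψ).2
  obtain ⟨w', hw', hw's⟩ := transport hst hυ.1 hγ.1 hu0 (hom2_ends hγ0 hδ0 hυ hu0).1 hz
  obtain ⟨zz, w, χ⟩ := w'
  obtain rfl : zz = z := hw's
  have hχ : mk3 χ ∈ υ := hw'
  have hc1 : mk3 (φ ≫ ψ) ∈ μ₁ := mem_of_pOne hst hα hβ hγ hσ hτ hμ₁.1 h1 hφ hψ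
  have hc2 : mk3 (ψ ≫ χ) ∈ μ₂ := mem_of_pOne hst hβ hγ hδ hτ hυ hμ₂.1 h2 hψ hχ
  constructor
  · rintro ⟨hν, hp⟩
    refine ⟨hν, ?_⟩
    have hc3 : mk3 ((φ ≫ ψ) ≫ χ) ∈ ν := mem_of_pOne hst hα hγ hδ hμ₁ hυ hν.1 hp hc1 hχ
    have hc4 : mk3 (φ ≫ ψ ≫ χ) ∈ ν := by rwa [Category.assoc] at hc3
    exact (key hst hα hβ hδ hσ hμ₂ hν.1 hφ hc2 hc4).1
  · rintro ⟨hν, hp⟩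
    refine ⟨hν, ?_⟩
    have hc3 : mk3 (φ ≫ ψ ≫ χ) ∈ ν := mem_of_pOne hst hα hβ hδ hσ hμ₂ hν.1 hp hφ hc2
    have hc4 : mk3 ((φ ≫ ψ) ≫ χ) ∈ ν := by rwa [← Category.assoc] at hc3
    exact (key hst hα hγ hδ hμ₁ hυ hν.1 hc1 hχ hc4).1
end

section
/- Let H : C → K-Mod be a functor, D = π*p*H the induced natural system on C (so D_f = H(t(f)), f_* = H(f) and g^* = id), and D₊ → E →(q) C a linear extension. Suppose (C,S,T) is an association schemoid whose underlying category C is a connected groupoid with T(f) = f⁻¹ for all morphisms f. Then the quasi-schemoid (E, S̃) with S̃ = {q⁻¹(σ)}_{σ∈S} admits an association schemoid structure in which E is a groupoid, T̃(f̃) = f̃⁻¹, and q is a morphism of association schemoids; moreover, for σ, τ, μ ∈ S̃ one has p^σ_{τμ} = ♯D_g · p^{q(σ)}_{q(τ)q(μ)} for some (and hence, C being a connected groupoid, any) morphism g of C. -/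
open CategoryTheory

universe v u

universe v₂ u₂

/-- The category of factorizations `F(C)` : objects are the morphisms of `C`, and a
morphism `f → g` is a pair `(α,β)` with `α ∘ f ∘ β = g`. -/
def FactCat (C : Type u) [Category.{v} C] : Type max u v := Mor C

/-- Reinterpret an element of `Mor C` as an object of `F(C)`. -/
def toFactCat {C : Type u} [Category.{v} C] (m : Mor C) : FactCat C := m

/-- Reinterpret an object of `F(C)` as an element of `Mor C`. -/
def FactCat.toMor {C : Type u} [Category.{v} C] (m : FactCat C) : Mor C := m

instance FactCat.category (C : Type u) [Category.{v} C] : Category (FactCat C) where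
  Hom f g :=
    {p : (g.toMor.1 ⟶ f.toMor.1) × (f.toMor.2.1 ⟶ g.toMor.2.1) //
      p.1 ≫ f.toMor.2.2 ≫ p.2 = g.toMor.2.2}
  id f := ⟨(𝟙 _, 𝟙 _), by simp⟩
  comp {f g h} p q := ⟨(q.1.1 ≫ p.1.1, p.1.2 ≫ q.1.2), by
    calc (q.1.1 ≫ p.1.1) ≫ f.toMor.2.2 ≫ (p.1.2 ≫ q.1.2)
        = q.1.1 ≫ (p.1.1 ≫ f.toMor.2.2 ≫ p.1.2) ≫ q.1.2 := by simp
      _ = q.1.1 ≫ g.toMor.2.2 ≫ q.1.2 := by rw [p.2]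
      _ = h.toMor.2.2 := q.2⟩
  id_comp p := by apply Subtype.ext; simp
  comp_id p := by apply Subtype.ext; simp
  assoc p q r := by apply Subtype.ext; simp

/-- The abelian group `D_m` associated by a natural system `N : F(C) → Ab` to a
morphism `m`. -/
def elN {C : Type u} [Category.{v} C] (N : FactCat C ⥤ AddCommGrpCat.{w}) (m : Mor C) :
    Type w :=
  N.obj (toFactCat m)

noncomputable instance elN.addCommGroup {C : Type u} [Category.{v} C]
    (N : FactCat C ⥤ AddCommGrpCat.{w}) (m : Mor C) : AddCommGroup (elN N m) :=
  inferInstanceAs (AddCommGroup (N.obj (toFactCat m)))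

/-- The morphism `(f, 1) : g → g ≫ f` of `F(C)` inducing `f_*`. -/
def factPushHom {C : Type u} [Category.{v} C] {x y z : C} (g : x ⟶ y) (f : y ⟶ z) :
    toFactCat (mk3 g) ⟶ toFactCat (mk3 (g ≫ f)) :=
  ⟨(𝟙 x, f), by simp [toFactCat, FactCat.toMor, mk3]⟩

/-- The morphism `(1, g) : f → g ≫ f` of `F(C)` inducing `g^*`. -/
def factPullHom {C : Type u} [Category.{v} C] {x y z : C} (g : x ⟶ y) (f : y ⟶ z) :
    toFactCat (mk3 f) ⟶ toFactCat (mk3 (g ≫ f)) :=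
  ⟨(g, 𝟙 z), by simp [toFactCat, FactCat.toMor, mk3]⟩

/-- `f_* : D_g → D_{f∘g}` (post-composition by `f`). -/
def fpush {C : Type u} [Category.{v} C] (N : FactCat C ⥤ AddCommGrpCat.{w}) {x y z : C}
    (g : x ⟶ y) (f : y ⟶ z) : elN N (mk3 g) → elN N (mk3 (g ≫ f)) :=
  fun a => N.map (factPushHom g f) a

/-- `g^* : D_f → D_{f∘g}` (pre-composition by `g`). -/
def fpull {C : Type u} [Category.{v} C] (N : FactCat C ⥤ AddCommGrpCat.{w}) {x y z : C}
    (g : x ⟶ y) (f : y ⟶ z) : elN N (mk3 f) → elN N (mk3 (g ≫ f)) :=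
  fun a => N.map (factPullHom g f) a

/-- Transport in the coefficients of a natural system along an equality of morphisms. -/
def elCast {C : Type u} [Category.{v} C] (N : FactCat C ⥤ AddCommGrpCat.{w}) {x y : C}
    {f g : x ⟶ y} (h : f = g) (a : elN N (mk3 f)) : elN N (mk3 g) := by
  subst h; exact a

/-- A linear extension `D₊ → E → C` of a small category `C` by a natural system
`N : F(C) → Ab` (Definition 5.1 of Kuribayashi–Matsuo, after Baues–Wirsching):
`E` has the same objects as `C`, `q` is a full functor which is the identity on
objects, each `D_f` acts transitively and effectively on `q⁻¹(f)`, and the linear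
distributivity law holds. -/
structure LinExt (C : Type u) [Category.{v} C]
    (N : FactCat C ⥤ AddCommGrpCat.{w}) where
  hom : C → C → Type w
  id' : ∀ x : C, hom x x
  comp' : ∀ {x y z : C}, hom x y → hom y z → hom x z
  id_comp' : ∀ {x y : C} (e : hom x y), comp' (id' x) e = e
  comp_id' : ∀ {x y : C} (e : hom x y), comp' e (id' y) = e
  assoc' : ∀ {w x y z : C} (a : hom w x) (b : hom x y) (c : hom y z),
    comp' (comp' a b) c = comp' a (comp' b c)
  /-- the projection `q`, identity on objects -/
  q : ∀ {x y : C}, hom x y → (x ⟶ y)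
  q_id : ∀ x : C, q (id' x) = 𝟙 x
  q_comp : ∀ {x y z : C} (e : hom x y) (e' : hom y z), q (comp' e e') = q e ≫ q e'
  /-- `q` is full -/
  q_surj : ∀ {x y : C} (f : x ⟶ y), ∃ e : hom x y, q e = f
  /-- the action of `D_f` on `q⁻¹(f)`, written `e + a` -/
  act : ∀ {x y : C} (e : hom x y), elN N (mk3 (q e)) → hom x y
  act_q : ∀ {x y : C} (e : hom x y) (a : elN N (mk3 (q e))), q (act e a) = q e
  act_zero : ∀ {x y : C} (e : hom x y), act e 0 = e
  act_add : ∀ {x y : C} (e : hom x y) (a b : elN N (mk3 (q e))),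
    act (act e a) (elCast N (act_q e a).symm b) = act e (a + b)
  /-- transitivity of the action on fibers of `q` -/
  act_trans : ∀ {x y : C} (e e' : hom x y) (h : q e = q e'),
    ∃ a : elN N (mk3 (q e)), act e a = e'
  /-- effectiveness (freeness) of the action -/
  act_free : ∀ {x y : C} (e : hom x y) (a : elN N (mk3 (q e))), act e a = e → a = 0
  /-- the linear distributivity law `(f₀+α)(g₀+β) = f₀g₀ + f_*β + g^*α` -/
  distrib : ∀ {x y z : C} (g₀ : hom x y) (f₀ : hom y z)
    (β : elN N (mk3 (q g₀))) (α : elN N (mk3 (q f₀))),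
    comp' (act g₀ β) (act f₀ α) =
      act (comp' g₀ f₀)
        (elCast N (q_comp g₀ f₀).symm
          (fpush N (q g₀) (q f₀) β + fpull N (q g₀) (q f₀) α))

/-- The total category `E` of a linear extension. -/
def LinExt.Carrier {C : Type u} [Category.{v} C]
    {N : FactCat C ⥤ AddCommGrpCat.{w}} (_ : LinExt C N) : Type u := C

instance LinExt.category {C : Type u} [Category.{v} C]
    {N : FactCat C ⥤ AddCommGrpCat.{w}} (L : LinExt C N) : Category L.Carrier where
  Hom x y := L.hom x y
  id x := L.id' x
  comp e e' := L.comp' e e'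
  id_comp e := L.id_comp' e
  comp_id e := L.comp_id' e
  assoc a b c := L.assoc' a b c

/-- The projection functor `q : E ⥤ C` of a linear extension. -/
def LinExt.qFunctor {C : Type u} [Category.{v} C]
    {N : FactCat C ⥤ AddCommGrpCat.{w}} (L : LinExt C N) : L.Carrier ⥤ C where
  obj x := x
  map e := L.q e
  map_id x := L.q_id x
  map_comp e e' := L.q_comp e e'

/-- The partition `S̃ = {q⁻¹(σ)}_{σ ∈ S}` of `mor E`. -/
def preimagePart {C : Type u} [Category.{v} C] {N : FactCat C ⥤ AddCommGrpCat.{w}}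
    (L : LinExt C N) (S : Set (Set (Mor C))) : Set (Set (Mor L.Carrier)) :=
  {s | ∃ σ ∈ S, s = morMap L.qFunctor ⁻¹' σ}

/-- A proper morphism of quasi-schemoids: a morphism which is injective on the
partitions. -/
def IsProperQSMor {C : Type u} {D : Type u₂} [Category.{v} C] [Category.{v₂} D]
    (SC : Set (Set (Mor C))) (SD : Set (Set (Mor D))) (F : C ⥤ D) : Prop :=
  IsQSMor SC SD F ∧
    ∀ σ₁ ∈ SC, ∀ σ₂ ∈ SC, ∀ τ ∈ SD,
      morMap F '' σ₁ ⊆ τ → morMap F '' σ₂ ⊆ τ → σ₁ = σ₂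

/-- The natural system `D = π* p* H` induced by a functor `H` on `C` :
`D_f = H(t(f))`, `f_* = H(f)`, `g^* = id`. -/
def inducedNS {C : Type u} [Category.{v} C] (H : C ⥤ AddCommGrpCat.{w}) :
    FactCat C ⥤ AddCommGrpCat.{w} where
  obj m := H.obj m.toMor.2.1
  map {f g} φ := H.map φ.1.2
  map_id f := H.map_id _
  map_comp φ ψ := H.map_comp _ _

/-! ### Auxiliary lemmas -/

universe w₁

section InducedNS

variable {C : Type u} [Category.{v} C] (H' : C ⥤ AddCommGrpCat.{w₁})

lemma elCast_induced {x y : C} {f g : x ⟶ y} (h : f = g)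
    (a : elN (inducedNS H') (mk3 f)) :
    elCast (inducedNS H') h a = a := by subst h; rfl

lemma fpull_induced {x y z : C} (g : x ⟶ y) (f : y ⟶ z)
    (a : elN (inducedNS H') (mk3 f)) :
    fpull (inducedNS H') g f a = a := by
  show (H'.map (𝟙 z)) a = a
  rw [H'.map_id]
  rfl

lemma fpush_zero {x y z : C} (g : x ⟶ y) (f : y ⟶ z) :
    fpush (inducedNS H') g f (0 : elN (inducedNS H') (mk3 g)) = 0 := by
  show (H'.map f) 0 = 0
  simp

variable (L : LinExt C (inducedNS H'))

lemma act_inj {x y : C} (e : L.hom x y) (a b : elN (inducedNS H') (mk3 (L.q e)))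
    (h : L.act e a = L.act e b) : a = b := by
  have h2 := L.act_add e b (a - b)
  rw [elCast_induced] at h2
  have hb : b + (a - b) = a := by abel
  rw [hb, h] at h2
  have h3 := L.act_free (L.act e b) (a - b) h2
  exact sub_eq_zero.mp h3

lemma comp_act_act {x y z : C} (f₀ : L.hom x y) (g₀ : L.hom y z)
    (β : elN (inducedNS H') (mk3 (L.q f₀)))
    (α : elN (inducedNS H') (mk3 (L.q f₀ ≫ L.q g₀))) :
    L.comp' (L.act f₀ β) (L.act g₀ α)
      = L.act (L.comp' f₀ g₀)
          (fpush (inducedNS H') (L.q f₀) (L.q g₀) β + α) := by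
  have d := L.distrib f₀ g₀ β α
  erw [elCast_induced, fpull_induced] at d
  exact d

lemma comp_act_right {x y z : C} (f₀ : L.hom x y) (g₀ : L.hom y z)
    (α : elN (inducedNS H') (mk3 (L.q (L.comp' f₀ g₀)))) :
    L.comp' f₀ (L.act g₀ α) = L.act (L.comp' f₀ g₀) α := by
  have h := comp_act_act H' L f₀ g₀ 0 α
  erw [L.act_zero, fpush_zero, zero_add] at h
  exact h

end InducedNS
section GroupoidExt

variable {C : Type u} [Groupoid.{v} C] (H' : C ⥤ AddCommGrpCat.{w₁})
variable (L : LinExt C (inducedNS H'))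

/-- Transporting coefficients along a morphism of the groupoid. -/
noncomputable def objEquiv {a b : C} (φ : a ⟶ b) : (H'.obj a : Type w₁) ≃ H'.obj b where
  toFun := H'.map φ
  invFun := H'.map (Groupoid.inv φ)
  left_inv u := by
    rw [← comp_apply, ← H'.map_comp, Groupoid.comp_inv, H'.map_id]
    rfl
  right_inv u := by
    rw [← comp_apply, ← H'.map_comp, Groupoid.inv_comp, H'.map_id]
    rfl

lemma exists_right_inv {x y : C} (e : L.hom x y) :
    ∃ r : L.hom y x, L.comp' e r = L.id' x := by
  obtain ⟨r₀, hr₀⟩ := L.q_surj (Groupoid.inv (L.q e))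
  have hq : L.q (L.comp' e r₀) = L.q (L.id' x) := by
    rw [L.q_comp, hr₀, L.q_id, Groupoid.comp_inv]
  obtain ⟨γ, hγ⟩ := L.act_trans (L.comp' e r₀) (L.id' x) hq
  refine ⟨L.act r₀ γ, ?_⟩
  rw [comp_act_right H' L e r₀ γ]
  exact hγ

lemma exists_inv {x y : C} (e : L.hom x y) :
    ∃ r : L.hom y x, L.comp' e r = L.id' x ∧ L.comp' r e = L.id' y := by
  obtain ⟨r, hr⟩ := exists_right_inv H' L e
  obtain ⟨r', hr'⟩ := exists_right_inv H' L r
  have he : r' = e := by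
    have h1 : L.comp' e (L.comp' r r') = e := by rw [hr', L.comp_id']
    rwa [← L.assoc', hr, L.id_comp'] at h1
  exact ⟨r, hr, by rw [← he]; exact hr'⟩

/-- The inverse of a morphism of the total category `E`. -/
noncomputable def einv {x y : C} (e : L.hom x y) : L.hom y x :=
  (exists_inv H' L e).choose

lemma einv_comp_left {x y : C} (e : L.hom x y) :
    L.comp' e (einv H' L e) = L.id' x :=
  (exists_inv H' L e).choose_spec.1

lemma einv_comp_right {x y : C} (e : L.hom x y) :
    L.comp' (einv H' L e) e = L.id' y :=
  (exists_inv H' L e).choose_spec.2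

lemma einv_unique {x y : C} (e : L.hom x y) (r : L.hom y x)
    (h : L.comp' e r = L.id' x) : einv H' L e = r := by
  calc einv H' L e = L.comp' (einv H' L e) (L.id' x) := (L.comp_id' _).symm
    _ = L.comp' (einv H' L e) (L.comp' e r) := by rw [h]
    _ = L.comp' (L.comp' (einv H' L e) e) r := (L.assoc' _ _ _).symm
    _ = L.comp' (L.id' y) r := by rw [einv_comp_right]
    _ = r := L.id_comp' _

lemma einv_einv {x y : C} (e : L.hom x y) : einv H' L (einv H' L e) = e :=
  einv_unique H' L (einv H' L e) e (einv_comp_right H' L e)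

lemma q_einv {x y : C} (e : L.hom x y) :
    L.q (einv H' L e) = Groupoid.inv (L.q e) := by
  have h : L.q e ≫ L.q (einv H' L e) = 𝟙 x := by
    rw [← L.q_comp, einv_comp_left, L.q_id]
  calc L.q (einv H' L e) = 𝟙 y ≫ L.q (einv H' L e) := (Category.id_comp _).symm
    _ = (Groupoid.inv (L.q e) ≫ L.q e) ≫ L.q (einv H' L e) := by rw [Groupoid.inv_comp]
    _ = Groupoid.inv (L.q e) ≫ (L.q e ≫ L.q (einv H' L e)) := Category.assoc _ _ _
    _ = Groupoid.inv (L.q e) := by rw [h, Category.comp_id]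

/-- The contravariant involution on the total category `E`. -/
noncomputable def Tprime : ContraFunctor L.Carrier where
  obj x := x
  map e := einv H' L e
  map_id x := einv_unique H' L _ _ (L.id_comp' _)
  map_comp {x y z} f g := by
    refine einv_unique H' L _ _ ?_
    show L.comp' (L.comp' f g) (L.comp' (einv H' L g) (einv H' L f)) = L.id' x
    erw [L.assoc', ← L.assoc' g, einv_comp_left, L.id_comp', einv_comp_left]

lemma Tprime_onMor (m : Mor L.Carrier) :
    (Tprime H' L).onMor m = ⟨m.2.1, m.1, einv H' L m.2.2⟩ := rfl

lemma Tprime_invol (m : Mor L.Carrier) :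
    (Tprime H' L).onMor ((Tprime H' L).onMor m) = m := by
  obtain ⟨x, y, e⟩ := m
  show (⟨x, y, einv H' L (einv H' L e)⟩ : Mor L.Carrier) = ⟨x, y, e⟩
  erw [einv_einv]

lemma morMap_Tprime (m : Mor L.Carrier) :
    morMap L.qFunctor ((Tprime H' L).onMor m) = morInv (morMap L.qFunctor m) := by
  obtain ⟨x, y, e⟩ := m
  show (⟨y, x, L.q (einv H' L e)⟩ : Mor C) = ⟨y, x, Groupoid.inv (L.q e)⟩
  erw [q_einv]

end GroupoidExt
section FiberProj

variable {C : Type u} [Category.{v} C] (H' : C ⥤ AddCommGrpCat.{w₁})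
variable (L : LinExt C (inducedNS H'))

lemma isComp_map {B : Type u₂} [Category.{v₂} B] (F : B ⥤ C) {a b m : Mor B}
    (h : IsComp a b m) : IsComp (morMap F a) (morMap F b) (morMap F m) := by
  obtain ⟨x, y, z, f, g, hb, ha, hm⟩ := h
  subst hb; subst ha; subst hm
  refine ⟨F.obj x, F.obj y, F.obj z, F.map f, F.map g, rfl, rfl, ?_⟩
  show morMap F (mk3 (f ≫ g)) = mk3 (F.map f ≫ F.map g)
  simp [morMap, mk3]
  rfl

/-- Projection of a concatenation fiber in `E` onto the corresponding fiber in `C`. -/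
def projFiber (τ μ : Set (Mor C)) {x z : C} (e : L.hom x z) :
    (compFiber (morMap L.qFunctor ⁻¹' τ) (morMap L.qFunctor ⁻¹' μ)
        (⟨x, z, e⟩ : Mor L.Carrier) : Set (Mor L.Carrier × Mor L.Carrier)) →
      (compFiber τ μ (⟨x, z, L.q e⟩ : Mor C) : Set (Mor C × Mor C)) :=
  fun p => ⟨(morMap L.qFunctor p.1.1, morMap L.qFunctor p.1.2),
    p.2.1, p.2.2.1, isComp_map L.qFunctor p.2.2.2⟩

end FiberProj
section FiberEquiv

variable {C : Type u} [Groupoid.{v} C] (H' : C ⥤ AddCommGrpCat.{w₁})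
variable (L : LinExt C (inducedNS H'))

lemma fiber_equiv (hconn : ∀ a b : C, Nonempty (a ⟶ b)) (τ μ : Set (Mor C))
    {x z : C} (e : L.hom x z) (y₀ : C) :
    Nonempty
      ((compFiber (morMap L.qFunctor ⁻¹' τ) (morMap L.qFunctor ⁻¹' μ)
          (⟨x, z, e⟩ : Mor L.Carrier) : Set (Mor L.Carrier × Mor L.Carrier))
        ≃ ((compFiber τ μ (⟨x, z, L.q e⟩ : Mor C) : Set (Mor C × Mor C)) ×
            (H'.obj y₀ : Type w₁))) := by
  classical
  have key : ∀ p₀ : (compFiber τ μ (⟨x, z, L.q e⟩ : Mor C) : Set (Mor C × Mor C)),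
      Nonempty ({p // projFiber H' L τ μ e p = p₀} ≃ (H'.obj y₀ : Type w₁)) := by
    intro p₀
    obtain ⟨⟨a, b⟩, hmem⟩ := p₀
    have ha := hmem.1
    have hb := hmem.2.1
    obtain ⟨x₁, y, z₁, f, g, hb', ha', hm⟩ := hmem.2.2
    subst hb'; subst ha'
    obtain ⟨hx, hrest⟩ := Sigma.mk.inj_iff.mp hm
    subst hx
    obtain ⟨hz, hfr⟩ := Sigma.mk.inj_iff.mp (eq_of_heq hrest)
    subst hz
    have hqe : L.q e = f ≫ g := eq_of_heq hfr
    obtain ⟨f₀, hf₀⟩ := L.q_surj f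
    obtain ⟨g₀, hg₀⟩ := L.q_surj g
    have hq1 : L.q (L.comp' f₀ g₀) = L.q e := by rw [L.q_comp, hf₀, hg₀, hqe]
    obtain ⟨γ, hγ⟩ := L.act_trans (L.comp' f₀ g₀) e hq1
    set g₁ := L.act g₀ γ with hg₁def
    have hcomp₁ : L.comp' f₀ g₁ = e := by
      rw [hg₁def, comp_act_right H' L f₀ g₀ γ]; exact hγ
    have hqg₁ : L.q g₁ = g := by erw [hg₁def, L.act_q, hg₀]
    -- memberships of lifted pairs
    have ha2 : ∀ α : elN (inducedNS H') (mk3 (L.q g₁)),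
        morMap L.qFunctor (mk3 (L.act g₁ α) : Mor L.Carrier) = mk3 g := by
      intro α
      show (⟨y, z, L.q (L.act g₁ α)⟩ : Mor C) = ⟨y, z, g⟩
      rw [L.act_q, hqg₁]
    have hb2 : ∀ β : elN (inducedNS H') (mk3 (L.q f₀)),
        morMap L.qFunctor (mk3 (L.act f₀ β) : Mor L.Carrier) = mk3 f := by
      intro β
      show (⟨x, y, L.q (L.act f₀ β)⟩ : Mor C) = ⟨x, y, f⟩
      rw [L.act_q, hf₀]
    have hmemτ : ∀ α : elN (inducedNS H') (mk3 (L.q g₁)),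
        (mk3 (L.act g₁ α) : Mor L.Carrier) ∈ morMap L.qFunctor ⁻¹' τ := by
      intro α
      show morMap L.qFunctor (mk3 (L.act g₁ α) : Mor L.Carrier) ∈ τ
      rw [ha2]; exact ha
    have hmemμ : ∀ β : elN (inducedNS H') (mk3 (L.q f₀)),
        (mk3 (L.act f₀ β) : Mor L.Carrier) ∈ morMap L.qFunctor ⁻¹' μ := by
      intro β
      show morMap L.qFunctor (mk3 (L.act f₀ β) : Mor L.Carrier) ∈ μ
      rw [hb2]; exact hb
    -- the composite of a lifted pair
    have hcompβ : ∀ β : elN (inducedNS H') (mk3 (L.q f₀)),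
        L.comp' (L.act f₀ β)
          (L.act g₁ (-(fpush (inducedNS H') (L.q f₀) (L.q g₁) β))) = e := by
      intro β
      have hc := comp_act_act H' L f₀ g₁ β
        (-(fpush (inducedNS H') (L.q f₀) (L.q g₁) β))
      erw [add_neg_cancel, L.act_zero, hcomp₁] at hc
      exact hc
    have hic : ∀ β : elN (inducedNS H') (mk3 (L.q f₀)),
        IsComp (mk3 (L.act g₁ (-(fpush (inducedNS H') (L.q f₀) (L.q g₁) β))) : Mor L.Carrier)
          (mk3 (L.act f₀ β)) (⟨x, z, e⟩ : Mor L.Carrier) := by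
      intro β
      refine ⟨x, y, z, L.act f₀ β,
        L.act g₁ (-(fpush (inducedNS H') (L.q f₀) (L.q g₁) β)), rfl, rfl, ?_⟩
      show (⟨x, z, e⟩ : Mor L.Carrier)
        = mk3 (L.comp' (L.act f₀ β) (L.act g₁ (-(fpush (inducedNS H') (L.q f₀) (L.q g₁) β))))
      rw [hcompβ β]
      rfl
    -- the lifting map
    let Φ : elN (inducedNS H') (mk3 (L.q f₀)) →
        {p // projFiber H' L τ μ e p = ⟨(mk3 g, mk3 f), hmem⟩} :=
      fun β => ⟨⟨(mk3 (L.act g₁ (-(fpush (inducedNS H') (L.q f₀) (L.q g₁) β))),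
          mk3 (L.act f₀ β)), hmemτ _, hmemμ _, hic β⟩, by
        apply Subtype.ext
        show (morMap L.qFunctor (mk3 (L.act g₁ (-(fpush (inducedNS H') (L.q f₀) (L.q g₁) β))) : Mor L.Carrier),
            morMap L.qFunctor (mk3 (L.act f₀ β) : Mor L.Carrier)) = (mk3 g, mk3 f)
        rw [Prod.mk.injEq]
        exact ⟨ha2 _, hb2 _⟩⟩
    have hinj : Function.Injective Φ := by
      intro β β' hββ'
      have h1 : (mk3 (L.act f₀ β) : Mor L.Carrier) = mk3 (L.act f₀ β') :=
        congrArg (fun p => p.1.1.2) hββ'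
      obtain ⟨-, h2⟩ := Sigma.mk.inj_iff.mp h1
      obtain ⟨-, h3⟩ := Sigma.mk.inj_iff.mp (eq_of_heq h2)
      exact act_inj H' L f₀ β β' (eq_of_heq h3)
    have hsurj : Function.Surjective Φ := by
      rintro ⟨⟨⟨a', b'⟩, hmem'⟩, hproj⟩
      obtain ⟨x₂, y₂, z₂, f', g', hb'', ha'', hm'⟩ := hmem'.2.2
      subst hb''; subst ha''
      obtain ⟨hx2, hrest2⟩ := Sigma.mk.inj_iff.mp hm'
      subst hx2
      obtain ⟨hz2, he2⟩ := Sigma.mk.inj_iff.mp (eq_of_heq hrest2)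
      subst hz2
      have he3 : e = L.comp' f' g' := eq_of_heq he2
      have hval := congrArg Subtype.val hproj
      have hvg : morMap L.qFunctor (mk3 g' : Mor L.Carrier) = mk3 g :=
        congrArg Prod.fst hval
      have hvf : morMap L.qFunctor (mk3 f' : Mor L.Carrier) = mk3 f :=
        congrArg Prod.snd hval
      obtain ⟨-, hrf⟩ := Sigma.mk.inj_iff.mp hvf
      obtain ⟨hy2, hqf'⟩ := Sigma.mk.inj_iff.mp (eq_of_heq hrf)
      subst hy2
      have hqf : L.q f' = f := eq_of_heq hqf'
      obtain ⟨-, hrg⟩ := Sigma.mk.inj_iff.mp hvg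
      obtain ⟨-, hqg'⟩ := Sigma.mk.inj_iff.mp (eq_of_heq hrg)
      have hqg : L.q g' = g := eq_of_heq hqg'
      obtain ⟨β, hβ⟩ := L.act_trans f₀ f' (by erw [hf₀, hqf])
      obtain ⟨α, hα⟩ := L.act_trans g₁ g' (by erw [hqg₁, hqg])
      have hsum : fpush (inducedNS H') (L.q f₀) (L.q g₁) β
          + (show elN (inducedNS H') (mk3 (L.q f₀ ≫ L.q g₁)) from α) = 0 := by
        apply act_inj H' L (L.comp' f₀ g₁)
        have hc := comp_act_act H' L f₀ g₁ β α
        rw [hβ, hα] at hc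
        erw [L.act_zero, ← hc, ← he3, ← hcomp₁]
      have h6 : α = -(fpush (inducedNS H') (L.q f₀) (L.q g₁) β) :=
        eq_neg_of_add_eq_zero_right hsum
      refine ⟨β, ?_⟩
      apply Subtype.ext
      apply Subtype.ext
      show ((mk3 (L.act g₁ (-(fpush (inducedNS H') (L.q f₀) (L.q g₁) β))) : Mor L.Carrier),
          (mk3 (L.act f₀ β) : Mor L.Carrier)) = (mk3 g', mk3 f')
      rw [Prod.mk.injEq]
      constructor
      · rw [← h6]
        exact congrArg mk3 hα
      · exact congrArg mk3 hβ
    exact ⟨(Equiv.ofBijective Φ ⟨hinj, hsurj⟩).symm.trans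
      (objEquiv H' ((hconn y y₀).some))⟩
  exact ⟨(Equiv.sigmaFiberEquiv (projFiber H' L τ μ e)).symm.trans
    ((Equiv.sigmaCongrRight fun p₀ => (key p₀).some).trans (Equiv.sigmaEquivProd _ _))⟩

end FiberEquiv
lemma morInv_invol {C : Type u} [Groupoid.{v} C] (m : Mor C) : morInv (morInv m) = m := by
  obtain ⟨x, y, f⟩ := m
  show (⟨x, y, Groupoid.inv (Groupoid.inv f)⟩ : Mor C) = ⟨x, y, f⟩
  simp [Groupoid.inv_eq_inv]
/-- Theorem 5.4 of Kuribayashi–Matsuo: let `H : C → K-Mod` be a functor, `D = π*p*H`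
the induced natural system and `D₊ → E → C` a linear extension. If `(C,S,T)` is an
association schemoid whose underlying category is a connected groupoid with
`T(f) = f⁻¹`, then the quasi-schemoid `(E, S̃)`, `S̃ = {q⁻¹(σ)}`, admits an association
schemoid structure in which `E` is a groupoid, `T̃(f̃) = f̃⁻¹` and `q` is a morphism of
association schemoids; moreover `p^σ_{τμ} = ♯D_g ⬝ p^{q(σ)}_{q(τ)q(μ)}` for any
morphism `g` of `C`. -/
theorem linExt_schemoid_structure
    {C : Type u} [Groupoid.{v} C] (A : AssnSchemoid C)
    (hconn : ∀ x y : C, Nonempty (x ⟶ y))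
    (hT : ∀ m : Mor C, A.T.onMor m = morInv m)
    (R : Type) [CommRing R] (HH : C ⥤ ModuleCat.{0} R)
    (L : LinExt C (inducedNS (HH ⋙ forget₂ (ModuleCat.{0} R) AddCommGrpCat.{0}))) :
    ∃ A' : AssnSchemoid L.Carrier,
      A'.part = preimagePart L A.part ∧
      -- `E` is a groupoid and `T̃(f̃) = f̃⁻¹`
      (∀ m : Mor L.Carrier, ∃ ginv : m.2.1 ⟶ m.1,
        m.2.2 ≫ ginv = 𝟙 m.1 ∧ ginv ≫ m.2.2 = 𝟙 m.2.1 ∧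
        A'.T.onMor m = ⟨m.2.1, m.1, ginv⟩) ∧
      -- `q` is a morphism of association schemoids
      IsASMor A'.part A.part A'.T A.T L.qFunctor ∧
      -- the structure constants
      (∀ σ₀ ∈ A.part, ∀ τ₀ ∈ A.part, ∀ μ₀ ∈ A.part, ∀ g : Mor C,
        ∀ m' : Mor L.Carrier, morMap L.qFunctor m' ∈ σ₀ → ∀ m ∈ σ₀,
          Nat.card (compFiber (morMap L.qFunctor ⁻¹' τ₀) (morMap L.qFunctor ⁻¹' μ₀) m') =
            Nat.card (elN (inducedNS (HH ⋙ forget₂ (ModuleCat.{0} R) AddCommGrpCat.{0})) g) *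
              Nat.card (compFiber τ₀ μ₀ m)) := by
  classical
  -- surjectivity of `q` on bundled morphisms
  have hsurjMor : ∀ m : Mor C, ∃ m' : Mor L.Carrier, morMap L.qFunctor m' = m := by
    rintro ⟨x, y, f⟩
    obtain ⟨e, he⟩ := L.q_surj f
    refine ⟨⟨x, y, e⟩, ?_⟩
    show (⟨x, y, L.q e⟩ : Mor C) = ⟨x, y, f⟩
    rw [he]
  -- the partition property
  have hpart : Setoid.IsPartition (preimagePart L A.part) := by
    constructor
    · rintro ⟨σ, hσ, hempty⟩
      have hne : σ.Nonempty := Set.nonempty_iff_ne_empty.mpr (by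
        rintro rfl; exact A.isPartition.1 hσ)
      obtain ⟨m, hm⟩ := hne
      obtain ⟨m', hm'⟩ := hsurjMor m
      have hmem : m' ∈ morMap L.qFunctor ⁻¹' σ := by
        show morMap L.qFunctor m' ∈ σ
        rw [hm']; exact hm
      rw [← hempty] at hmem
      exact hmem
    · intro m'
      obtain ⟨σ, ⟨hσ, hmσ⟩, huniq⟩ := A.isPartition.2 (morMap L.qFunctor m')
      refine ⟨morMap L.qFunctor ⁻¹' σ, ⟨⟨σ, hσ, rfl⟩, hmσ⟩, ?_⟩
      rintro s ⟨⟨σ', hσ', rfl⟩, hms'⟩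
      rw [huniq σ' ⟨hσ', hms'⟩]
  -- the concatenation axiom
  have hconcat : ∀ s ∈ preimagePart L A.part, ∀ t ∈ preimagePart L A.part,
      ∀ u ∈ preimagePart L A.part, ∀ f' ∈ u, ∀ g' ∈ u,
      Nonempty ((compFiber s t f' : Set (Mor L.Carrier × Mor L.Carrier))
        ≃ (compFiber s t g' : Set (Mor L.Carrier × Mor L.Carrier))) := by
    rintro s ⟨σ, hσ, rfl⟩ t ⟨τ, hτ, rfl⟩ u ⟨μ, hμ, rfl⟩ f' hf' g' hg'
    obtain ⟨x1, z1, e1⟩ := f'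
    obtain ⟨x2, z2, e2⟩ := g'
    obtain ⟨E1⟩ := fiber_equiv (HH ⋙ forget₂ (ModuleCat.{0} R) AddCommGrpCat.{0}) L hconn σ τ e1 x1
    obtain ⟨E2⟩ := fiber_equiv (HH ⋙ forget₂ (ModuleCat.{0} R) AddCommGrpCat.{0}) L hconn σ τ e2 x1
    obtain ⟨EC⟩ := A.concat σ hσ τ hτ μ hμ _ hf' _ hg'
    exact ⟨E1.trans ((Equiv.prodCongr EC (Equiv.refl _)).trans E2.symm)⟩
  -- `T̃` respects the partition
  have hTpart : ∀ s ∈ preimagePart L A.part,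
      (Tprime (HH ⋙ forget₂ (ModuleCat.{0} R) AddCommGrpCat.{0}) L).onMor '' s ∈ preimagePart L A.part := by
    rintro s ⟨σ, hσ, rfl⟩
    refine ⟨A.T.onMor '' σ, A.T_part σ hσ, ?_⟩
    ext m'
    constructor
    · rintro ⟨n, hn, rfl⟩
      show morMap L.qFunctor ((Tprime (HH ⋙ forget₂ (ModuleCat.{0} R) AddCommGrpCat.{0}) L).onMor n) ∈ A.T.onMor '' σ
      rw [morMap_Tprime]
      refine ⟨morMap L.qFunctor n, hn, ?_⟩
      rw [hT]
    · intro h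
      refine ⟨(Tprime (HH ⋙ forget₂ (ModuleCat.{0} R) AddCommGrpCat.{0}) L).onMor m', ?_, Tprime_invol (HH ⋙ forget₂ (ModuleCat.{0} R) AddCommGrpCat.{0}) L m'⟩
      show morMap L.qFunctor ((Tprime (HH ⋙ forget₂ (ModuleCat.{0} R) AddCommGrpCat.{0}) L).onMor m') ∈ σ
      rw [morMap_Tprime]
      obtain ⟨n, hn, hn2⟩ := h
      rw [hT] at hn2
      rw [← hn2, morInv_invol]
      exact hn
  -- endomorphism classes
  have hendo : ∀ s ∈ preimagePart L A.part,
      (s ∩ JEndo L.Carrier).Nonempty → s ⊆ JEndo L.Carrier := by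
    rintro s ⟨σ, hσ, rfl⟩ ⟨m', hm'1, hm'2⟩
    have h1 : σ ⊆ JEndo C := A.endo σ hσ ⟨morMap L.qFunctor m', hm'1, hm'2⟩
    intro n' hn'
    exact h1 hn'
  refine ⟨⟨⟨preimagePart L A.part, hpart, hconcat⟩, Tprime (HH ⋙ forget₂ (ModuleCat.{0} R) AddCommGrpCat.{0}) L,
    Tprime_invol (HH ⋙ forget₂ (ModuleCat.{0} R) AddCommGrpCat.{0}) L, hTpart, hendo⟩, rfl, ?_, ?_, ?_⟩
  · -- E is a groupoid with T̃ the inversion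
    intro m
    exact ⟨einv (HH ⋙ forget₂ (ModuleCat.{0} R) AddCommGrpCat.{0}) L m.2.2, einv_comp_left (HH ⋙ forget₂ (ModuleCat.{0} R) AddCommGrpCat.{0}) L m.2.2, einv_comp_right (HH ⋙ forget₂ (ModuleCat.{0} R) AddCommGrpCat.{0}) L m.2.2, rfl⟩
  · -- q is a morphism of association schemoids
    constructor
    · rintro s ⟨σ, hσ, rfl⟩
      refine ⟨σ, hσ, ?_⟩
      rintro m ⟨n, hn, rfl⟩
      exact hn
    · intro m
      show morMap L.qFunctor ((Tprime (HH ⋙ forget₂ (ModuleCat.{0} R) AddCommGrpCat.{0}) L).onMor m) = A.T.onMor (morMap L.qFunctor m)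
      rw [morMap_Tprime, hT]
  · -- the structure constants
    intro σ₀ hσ₀ τ₀ hτ₀ μ₀ hμ₀ g m' hm' m hm
    obtain ⟨x, z, e⟩ := m'
    obtain ⟨E1⟩ := fiber_equiv (HH ⋙ forget₂ (ModuleCat.{0} R) AddCommGrpCat.{0}) L hconn τ₀ μ₀ e g.2.1
    obtain ⟨EC⟩ := A.concat τ₀ hτ₀ μ₀ hμ₀ σ₀ hσ₀ _ hm' m hm
    rw [Nat.card_congr (E1.trans (Equiv.prodCongr EC (Equiv.refl _)))]
    rw [Nat.card_prod]
    exact mul_comm _ _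
end
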